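/- Let ξ satisfy the curve condition, let m_* < m < 1 and c > 0, and let 0 < r₀ < r̃₀ with r₀ ≤ 1. Let ζ : ℝ → ℝ be any function with 0 ≤ ζ ≤ 1, ζ(σ) = 1 for σ ≤ −2 and ζ(σ) = 0 for σ ≥ −1, and let M satisfy M > max{ 3^{m/(1−m)}·Aᵐ·c^{−m/(1−m)}·r₀^{−2m/(1−m)}, 10^{m/(1−m)}·Aᵐ·c^{−m/(1−m)}·r₀^{−2m/(1−m)} }. Then for every x ∈ ℝⁿ with r(x) = r₀ and every t ∈ ℝ (with σ = σ(x,t)), U(x,t)ᵐ − M − M·|σ|^{m/(1−m)}·ζ(σ) ≤ 0; consequently the function u⁻(x,t) := (1−ε')·[U(x,t)ᵐ − M − M·|σ|^{m/(1−m)}·ζ(σ)]₊^{1/m} vanishes whenever r(x) = r₀ (for any 0 < ε' < 1). -/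
import Mathlib


open scoped RealInnerProductSpace
open Filter Topology Set

/-- The Laplacian of `f : ℝⁿ → ℝ`: the sum of the second derivatives along the
standard orthonormal coordinate directions. -/
noncomputable def lap {n : ℕ} (f : EuclideanSpace ℝ (Fin n) → ℝ)
    (x : EuclideanSpace ℝ (Fin n)) : ℝ :=
  ∑ i : Fin n, iteratedFDeriv ℝ 2 f x ![EuclideanSpace.single i 1, EuclideanSpace.single i 1]

/-- `m_* = 0` if `n = 2` and `(n-3)/(n-1)` if `n ≥ 3`. -/
noncomputable def mstar (n : ℕ) : ℝ := if n = 2 then 0 else ((n : ℝ) - 3) / ((n : ℝ) - 1)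

lemma aux_bound (m A c B D r₀ : ℝ) (hm0 : 0 < m) (hm1 : m < 1)
    (hA : 0 ≤ A) (hc : 0 < c) (hr₀ : 0 < r₀) (hD : 0 < D)
    (hBpos : 0 < B) (hB : r₀ ^ 2 / D ≤ B) :
    (A * c ^ (-(1 / (1 - m))) * B ^ (-(1 / (1 - m)))) ^ m ≤
      D ^ (m / (1 - m)) * A ^ m * c ^ (-(m / (1 - m))) * r₀ ^ (-(2 * m / (1 - m))) := by
  have h1m : 0 < 1 - m := by linarith
  have hθ : 0 ≤ m / (1 - m) := div_nonneg hm0.le h1m.le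
  have hcp : (0:ℝ) ≤ c ^ (-(1 / (1 - m))) := Real.rpow_nonneg hc.le _
  have hL : (A * c ^ (-(1 / (1 - m))) * B ^ (-(1 / (1 - m)))) ^ m
      = A ^ m * c ^ (-(m / (1 - m))) * B ^ (-(m / (1 - m))) := by
    rw [Real.mul_rpow (mul_nonneg hA hcp) (Real.rpow_nonneg hBpos.le _),
        Real.mul_rpow hA hcp, ← Real.rpow_mul hc.le, ← Real.rpow_mul hBpos.le,
        show -(1 / (1 - m)) * m = -(m / (1 - m)) by ring]
  have h2 : B ^ (-(m / (1 - m))) ≤ (r₀ ^ 2 / D) ^ (-(m / (1 - m))) :=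
    Real.rpow_le_rpow_of_nonpos (by positivity) hB (by linarith)
  have h3 : (r₀ ^ 2 / D) ^ (-(m / (1 - m)))
      = D ^ (m / (1 - m)) * r₀ ^ (-(2 * m / (1 - m))) := by
    rw [div_eq_mul_inv, Real.mul_rpow (sq_nonneg r₀) (inv_nonneg.mpr hD.le),
        Real.inv_rpow hD.le, ← Real.rpow_neg hD.le, neg_neg,
        ← Real.rpow_natCast r₀ 2, ← Real.rpow_mul hr₀.le,
        show ((2:ℕ):ℝ) * (-(m / (1 - m))) = -(2 * m / (1 - m)) by push_cast; ring]
    ring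
  calc (A * c ^ (-(1 / (1 - m))) * B ^ (-(1 / (1 - m)))) ^ m
      = A ^ m * c ^ (-(m / (1 - m))) * B ^ (-(m / (1 - m))) := hL
    _ ≤ A ^ m * c ^ (-(m / (1 - m))) * (r₀ ^ 2 / D) ^ (-(m / (1 - m))) := by
        apply mul_le_mul_of_nonneg_left h2 (by positivity)
    _ = D ^ (m / (1 - m)) * A ^ m * c ^ (-(m / (1 - m))) * r₀ ^ (-(2 * m / (1 - m))) := by
        rw [h3]; ring

lemma pos_B (r₀ σ R : ℝ) (hr₀ : 0 < r₀) (hRnn : 0 ≤ R)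
    (hR2 : R ^ 2 = r₀ ^ 2 + σ ^ 2) : 0 < R + σ := by
  nlinarith [sq_nonneg (R + σ), sq_nonneg (R - σ)]

lemma bound5 (r₀ σ R : ℝ) (hr₀ : 0 < r₀) (hr₀1 : r₀ ≤ 1) (hRnn : 0 ≤ R)
    (hR2 : R ^ 2 = r₀ ^ 2 + σ ^ 2) (hσ : -2 ≤ σ) (hB : 0 < R + σ) :
    r₀ ^ 2 / 5 ≤ R + σ := by
  rcases le_or_gt 0 σ with h0 | h0
  · have hRr : r₀ ≤ R := by nlinarith
    nlinarith
  · have hR3 : R ≤ 3 := by nlinarith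
    have h5 : R - σ ≤ 5 := by linarith
    nlinarith [mul_nonneg hB.le (show (0:ℝ) ≤ 5 - (R - σ) by linarith)]

lemma bound3 (r₀ σ R : ℝ) (hr₀ : 0 < r₀) (hr₀1 : r₀ ≤ 1) (hRnn : 0 ≤ R)
    (hR2 : R ^ 2 = r₀ ^ 2 + σ ^ 2) (hσ : σ ≤ -2) (hB : 0 < R + σ)
    (hRle : R ≤ r₀ - σ) : r₀ ^ 2 / (3 * (-σ)) ≤ R + σ := by
  have hD : (0:ℝ) < 3 * (-σ) := by linarith
  rw [div_le_iff₀ hD]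
  nlinarith [mul_nonneg hB.le (show (0:ℝ) ≤ -3 * σ - (R - σ) by linarith)]

set_option maxHeartbeats 1000000 in
theorem stmt_14 (n : ℕ) (hn : 2 ≤ n)
    (m : ℝ) (hm : mstar n < m) (hm1 : m < 1) (c : ℝ) (hc : 0 < c)
    (ξ : ℝ → EuclideanSpace ℝ (Fin n))
    (hξC3 : ContDiff ℝ 3 ξ) (hξinj : Function.Injective ξ)
    (hξ1 : ∀ σ : ℝ, ‖deriv ξ σ‖ = 1)
    (K : ℝ) (hK : 1 < K)
    (hξ2 : ∀ σ : ℝ, ‖deriv (deriv ξ) σ‖ ≤ K)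
    (hξ3 : ∀ σ : ℝ, ‖deriv (deriv (deriv ξ)) σ‖ ≤ K)
    (r : EuclideanSpace ℝ (Fin n) → ℝ)
    (hrdef : ∀ x, r x = Metric.infDist x (Set.range ξ))
    (rt0 : ℝ) (hrt0 : 0 < rt0) (hrt0' : rt0 < (2 * K)⁻¹)
    (s : EuclideanSpace ℝ (Fin n) → ℝ)
    (hsdef : ∀ x, r x < rt0 →
      r x = ‖x - ξ (s x)‖ ∧ ∀ σ : ℝ, r x = ‖x - ξ σ‖ → σ = s x)
    (A : ℝ)
    (hA : A = (((n : ℝ) - 1) * m / (1 - m) * (m - ((n : ℝ) - 3) / ((n : ℝ) - 1)))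
        ^ ((1 : ℝ) / (1 - m)))
    (U : EuclideanSpace ℝ (Fin n) → ℝ → ℝ)
    (hU : ∀ x t, U x t = A * c ^ (-(1 / (1 - m)))
        * (Real.sqrt (r x ^ 2 + (s x - c * t) ^ 2) + (s x - c * t)) ^ (-(1 / (1 - m))))
    (r₀ : ℝ) (hr₀ : 0 < r₀) (hr₀' : r₀ < rt0) (hr₀1 : r₀ ≤ 1)
    (ζ : ℝ → ℝ) (hζ01 : ∀ σ : ℝ, 0 ≤ ζ σ ∧ ζ σ ≤ 1)
    (hζ1 : ∀ σ : ℝ, σ ≤ -2 → ζ σ = 1) (hζ0 : ∀ σ : ℝ, -1 ≤ σ → ζ σ = 0)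
    (M : ℝ)
    (hM : M > max ((3 : ℝ) ^ (m / (1 - m)) * A ^ m * c ^ (-(m / (1 - m)))
        * r₀ ^ (-(2 * m / (1 - m))))
      ((10 : ℝ) ^ (m / (1 - m)) * A ^ m * c ^ (-(m / (1 - m)))
        * r₀ ^ (-(2 * m / (1 - m))))) :
    ∀ (x : EuclideanSpace ℝ (Fin n)) (t : ℝ), r x = r₀ →
      U x t ^ m - M - M * |s x - c * t| ^ (m / (1 - m)) * ζ (s x - c * t) ≤ 0 ∧
      ∀ ε' : ℝ, 0 < ε' → ε' < 1 →
        (1 - ε') * (max (U x t ^ m - M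
          - M * |s x - c * t| ^ (m / (1 - m)) * ζ (s x - c * t)) 0) ^ (1 / m) = 0 := by
  intro x t hrx
  -- basic facts
  have hn2 : (2:ℝ) ≤ (n:ℝ) := by exact_mod_cast hn
  have hmstar0 : 0 ≤ mstar n := by
    unfold mstar
    split
    · norm_num
    · rename_i h
      have h3 : 3 ≤ n := by omega
      have h3' : (3:ℝ) ≤ (n:ℝ) := by exact_mod_cast h3
      apply div_nonneg <;> linarith
  have hmge : ((n : ℝ) - 3) / ((n : ℝ) - 1) ≤ mstar n := by
    unfold mstar
    split
    · rename_i h; subst h; norm_num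
    · exact le_refl _
  have hm0 : 0 < m := lt_of_le_of_lt hmstar0 hm
  have h1m : 0 < 1 - m := by linarith
  have hθ : 0 ≤ m / (1 - m) := div_nonneg hm0.le h1m.le
  have hA0 : 0 ≤ A := by
    rw [hA]
    apply Real.rpow_nonneg
    have h1 : 0 ≤ ((n : ℝ) - 1) * m / (1 - m) := by
      apply div_nonneg _ h1m.le; nlinarith
    have h2 : 0 ≤ m - ((n : ℝ) - 3) / ((n : ℝ) - 1) := by
      have := lt_of_le_of_lt hmge hm; linarith
    exact mul_nonneg h1 h2
  have hM0 : 0 < M := by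
    have h10 : (0:ℝ) ≤ (10 : ℝ) ^ (m / (1 - m)) * A ^ m * c ^ (-(m / (1 - m)))
        * r₀ ^ (-(2 * m / (1 - m))) := by positivity
    exact lt_of_le_of_lt (h10.trans (le_max_right _ _)) hM
  set σ : ℝ := s x - c * t with hσdef
  have hUx : U x t = A * c ^ (-(1 / (1 - m)))
      * (Real.sqrt (r₀ ^ 2 + σ ^ 2) + σ) ^ (-(1 / (1 - m))) := by
    rw [hU, hrx]
  set R : ℝ := Real.sqrt (r₀ ^ 2 + σ ^ 2) with hRdef
  have hR2 : R ^ 2 = r₀ ^ 2 + σ ^ 2 := Real.sq_sqrt (by positivity)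
  have hRnn : 0 ≤ R := Real.sqrt_nonneg _
  have hBpos : 0 < R + σ := pos_B r₀ σ R hr₀ hRnn hR2
  -- main inequality
  have hmain : U x t ^ m - M - M * |σ| ^ (m / (1 - m)) * ζ σ ≤ 0 := by
    rcases le_or_gt (-2) σ with hσ2 | hσ2
    · -- σ ≥ -2 : U^m ≤ M
      have hB5 : r₀ ^ 2 / 5 ≤ R + σ := bound5 r₀ σ R hr₀ hr₀1 hRnn hR2 hσ2 hBpos
      have key := aux_bound m A c (R + σ) 5 r₀ hm0 hm1 hA0 hc hr₀ (by norm_num) hBpos hB5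
      have h510 : (5:ℝ) ^ (m / (1 - m)) ≤ (10:ℝ) ^ (m / (1 - m)) :=
        Real.rpow_le_rpow (by norm_num) (by norm_num) hθ
      have hX : (0:ℝ) ≤ A ^ m * c ^ (-(m / (1 - m))) * r₀ ^ (-(2 * m / (1 - m))) := by
        positivity
      have hUM : U x t ^ m ≤ M := by
        calc U x t ^ m
            ≤ (5:ℝ) ^ (m / (1 - m)) * A ^ m * c ^ (-(m / (1 - m)))
              * r₀ ^ (-(2 * m / (1 - m))) := by rw [hUx]; exact key
          _ = (5:ℝ) ^ (m / (1 - m)) * (A ^ m * c ^ (-(m / (1 - m)))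
              * r₀ ^ (-(2 * m / (1 - m)))) := by ring
          _ ≤ (10:ℝ) ^ (m / (1 - m)) * (A ^ m * c ^ (-(m / (1 - m)))
              * r₀ ^ (-(2 * m / (1 - m)))) := mul_le_mul_of_nonneg_right h510 hX
          _ = (10:ℝ) ^ (m / (1 - m)) * A ^ m * c ^ (-(m / (1 - m)))
              * r₀ ^ (-(2 * m / (1 - m))) := by ring
          _ ≤ max _ _ := le_max_right _ _
          _ ≤ M := hM.le
      have hζnn : 0 ≤ M * |σ| ^ (m / (1 - m)) * ζ σ :=
        mul_nonneg (mul_nonneg hM0.le (Real.rpow_nonneg (abs_nonneg _) _)) (hζ01 σ).1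
      linarith
    · -- σ < -2
      have hσ2' : σ ≤ -2 := hσ2.le
      have hζσ : ζ σ = 1 := hζ1 σ hσ2'
      have habs : |σ| = -σ := abs_of_neg (by linarith)
      have hRle : R ≤ r₀ - σ := by
        have h := Real.sqrt_le_sqrt (show r₀ ^ 2 + σ ^ 2 ≤ (r₀ - σ) ^ 2 by nlinarith)
        rwa [Real.sqrt_sq (by linarith)] at h
      have hD : (0:ℝ) < 3 * (-σ) := by linarith
      have hB3 : r₀ ^ 2 / (3 * (-σ)) ≤ R + σ := bound3 r₀ σ R hr₀ hr₀1 hRnn hR2 hσ2' hBpos hRle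
      have key := aux_bound m A c (R + σ) (3 * (-σ)) r₀ hm0 hm1 hA0 hc hr₀ hD hBpos hB3
      have hsplit : (3 * (-σ)) ^ (m / (1 - m))
          = (3:ℝ) ^ (m / (1 - m)) * (-σ) ^ (m / (1 - m)) :=
        Real.mul_rpow (by norm_num) (by linarith)
      have hM3 : (3:ℝ) ^ (m / (1 - m)) * A ^ m * c ^ (-(m / (1 - m)))
          * r₀ ^ (-(2 * m / (1 - m))) ≤ M := ((le_max_left _ _).trans_lt hM).le
      have hσθ : (0:ℝ) ≤ (-σ) ^ (m / (1 - m)) := Real.rpow_nonneg (by linarith) _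
      have hUM : U x t ^ m ≤ M * (-σ) ^ (m / (1 - m)) := by
        calc U x t ^ m
            ≤ (3 * (-σ)) ^ (m / (1 - m)) * A ^ m * c ^ (-(m / (1 - m)))
              * r₀ ^ (-(2 * m / (1 - m))) := by rw [hUx]; exact key
          _ = (-σ) ^ (m / (1 - m)) * ((3:ℝ) ^ (m / (1 - m)) * A ^ m
              * c ^ (-(m / (1 - m))) * r₀ ^ (-(2 * m / (1 - m)))) := by rw [hsplit]; ring
          _ ≤ (-σ) ^ (m / (1 - m)) * M := mul_le_mul_of_nonneg_left hM3 hσθ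
          _ = M * (-σ) ^ (m / (1 - m)) := by ring
      rw [hζσ, habs, mul_one]
      linarith
  refine ⟨hmain, fun ε' _ _ => ?_⟩
  rw [max_eq_right hmain, Real.zero_rpow (one_div_ne_zero hm0.ne'), mul_zero]
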